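/- Let 𝒦 be a finite set of strings over an alphabet Σ, and let S_i, S_j be strings such that S_j is a proper suffix of S_i and S_i occurs in at least one string of 𝒦. Suppose that every string S' such that S_j is a suffix of S', S' is a suffix of S_i and S' ≠ S_i is not left-maximal in 𝒦, i.e., for each such S' there is a character a(S') ∈ Σ such that every occurrence of S' in 𝒦 is immediately preceded by a(S'). Then for every T ∈ 𝒦 and position e, S_i occurs in T ending at position e if and only if S_j occurs in T ending at position e. -/

import Mathlib

/-- `OccursEndingAt P T e` : the string `P` occurs in `T` ending at position `e`,
i.e. `T = u ++ P ++ v` with `|u| + |P| = e`. -/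
def OccursEndingAt {α : Type*} (P T : List α) (e : ℕ) : Prop :=
  ∃ u v : List α, T = u ++ P ++ v ∧ u.length + P.length = e

/-- `NotLeftMaximal 𝒦 P` : there is a character `a` such that every occurrence of `P`
in a string of `𝒦` is immediately preceded by `a`. -/
def NotLeftMaximal {α : Type*} (𝒦 : Finset (List α)) (P : List α) : Prop :=
  ∃ a : α, ∀ T ∈ 𝒦, ∀ u v : List α, T = u ++ P ++ v → u ≠ [] ∧ u.getLast? = some a

private lemma aux_extend {α : Type*} (𝒦 : Finset (List α)) (Si Sj : List α)
    (hocc : ∃ T ∈ 𝒦, Si <:+: T)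
    (hnlm : ∀ S' : List α, Sj <:+ S' → S' <:+ Si → S' ≠ Si → NotLeftMaximal 𝒦 S') :
    ∀ n : ℕ, ∀ S' : List α, Sj <:+ S' → S' <:+ Si → Si.length - S'.length = n →
      ∀ T ∈ 𝒦, ∀ e : ℕ, OccursEndingAt S' T e → OccursEndingAt Si T e := by
  intro n
  induction n using Nat.strong_induction_on with
  | _ n ih =>
    intro S' hjs hsi hlen T hT e hOcc
    by_cases hne : S' = Si
    · subst hne; exact hOcc
    · -- S' is a proper suffix of Si
      obtain ⟨p, hp⟩ := hsi
      have hpne : p ≠ [] := by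
        rintro rfl; exact hne (by simpa using hp)
      obtain ⟨q, b, rfl⟩ := List.eq_nil_or_concat p |>.resolve_left hpne
      obtain ⟨a, ha⟩ := hnlm S' hjs ⟨q ++ [b], by rw [← hp]; simp⟩ hne
      -- from the occurrence of Si in some T₀, deduce a = b
      obtain ⟨T₀, hT₀, x, y, hxy⟩ := hocc
      have hab : a = b := by
        have := (ha T₀ hT₀ (x ++ (q ++ [b])) y (by
          rw [← hxy, ← hp]; simp)).2
        have hlast : (x ++ (q ++ [b])).getLast? = some b := by
          rw [← List.append_assoc]; exact List.getLast?_concat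
        rw [hlast] at this
        exact (Option.some_injective _ this).symm
      subst hab
      -- now extend the occurrence in T
      obtain ⟨u, v, hT', he⟩ := hOcc
      obtain ⟨hune, hulast⟩ := ha T hT u v hT'
      obtain ⟨u', rfl⟩ : ∃ u', u = u' ++ [a] := by
        refine ⟨u.dropLast, ?_⟩
        rw [List.getLast?_eq_getLast hune, Option.some_inj] at hulast
        rw [← hulast]
        exact (List.dropLast_append_getLast hune).symm
      -- apply IH with a :: S'
      have hS'len : S'.length < Si.length := by
        rw [← hp]
        simp only [List.concat_eq_append, List.length_append, List.length_cons,
          List.length_nil]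
        omega
      refine ih (Si.length - (a :: S').length) ?_ (a :: S')
        (hjs.trans (List.suffix_cons a S')) ⟨q, by rw [← hp]; simp⟩ rfl T hT e ?_
      · simp only [List.length_cons]; omega
      · exact ⟨u', v, by simpa using hT', by simp at he ⊢; omega⟩

theorem occurrences_eq_of_not_left_maximal {α : Type*} (𝒦 : Finset (List α))
    (Si Sj : List α) (hsuf : Sj <:+ Si) (hproper : Sj ≠ Si)
    (hocc : ∃ T ∈ 𝒦, Si <:+: T)
    (hnlm : ∀ S' : List α, Sj <:+ S' → S' <:+ Si → S' ≠ Si → NotLeftMaximal 𝒦 S') :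
    ∀ T ∈ 𝒦, ∀ e : ℕ, OccursEndingAt Si T e ↔ OccursEndingAt Sj T e := by
  intro T hT e
  constructor
  · rintro ⟨u, v, rfl, he⟩
    obtain ⟨p, hp⟩ := hsuf
    exact ⟨u ++ p, v, by rw [← hp]; simp, by rw [← hp] at he; simp at he ⊢; omega⟩
  · intro h
    exact aux_extend 𝒦 Si Sj hocc hnlm _ Sj List.suffix_rfl hsuf rfl T hT e h
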